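/- Under the conformal change G = 2(k−U)g, the symmetric differential of a 1-form u satisfies (dᴳˢ u)ᵢⱼ = 2(k−U) (dᵍˢ (u/(2(k−U))))ᵢⱼ − (dU, u/(2(k−U)))_g gᵢⱼ, where dˢ denotes the symmetrized covariant derivative (1/2)(∇ᵢuⱼ + ∇ⱼuᵢ) with respect to the indicated metric. -/

import Mathlib

open scoped BigOperators

/-- Partial derivative in coordinates on `ℝⁿ`. -/
noncomputable def pd {n : ℕ} (f : (Fin n → ℝ) → ℝ) (i : Fin n) (x : Fin n → ℝ) : ℝ :=
  fderiv ℝ f x (Pi.single i 1)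

/-- Christoffel symbols of the Levi-Civita connection of `g` (with inverse `ginv`). -/
noncomputable def christoffel {n : ℕ} (g ginv : (Fin n → ℝ) → Matrix (Fin n) (Fin n) ℝ)
    (x : Fin n → ℝ) (k i j : Fin n) : ℝ :=
  (1 / 2) * ∑ l, ginv x k l *
    (pd (fun y => g y l j) i x + pd (fun y => g y l i) j x - pd (fun y => g y i j) l x)

/-- Symmetric differential `(dˢu)ᵢⱼ = ½(∇ᵢuⱼ + ∇ⱼuᵢ)` of a 1-form `u` with respect to
the Levi-Civita connection of `g`. -/
noncomputable def dsym {n : ℕ} (g ginv : (Fin n → ℝ) → Matrix (Fin n) (Fin n) ℝ)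
    (u : (Fin n → ℝ) → Fin n → ℝ) (x : Fin n → ℝ) (i j : Fin n) : ℝ :=
  (1 / 2) * (pd (fun y => u y j) i x + pd (fun y => u y i) j x)
    - ∑ k, christoffel g ginv x k i j * u x k

lemma pd_mul {n : ℕ} {f h : (Fin n → ℝ) → ℝ} {x : Fin n → ℝ} (hf : DifferentiableAt ℝ f x)
    (hh : DifferentiableAt ℝ h x) (i : Fin n) :
    pd (fun y => f y * h y) i x = pd f i x * h x + f x * pd h i x := by
  unfold pd
  rw [fderiv_fun_mul hf hh]
  simp
  ring

lemma pd_inv {n : ℕ} {f : (Fin n → ℝ) → ℝ} {x : Fin n → ℝ} (hf : DifferentiableAt ℝ f x)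
    (h0 : f x ≠ 0) (i : Fin n) :
    pd (fun y => (f y)⁻¹) i x = -(pd f i x) / (f x)^2 := by
  unfold pd
  have h1 : HasFDerivAt (fun y => (f y)⁻¹)
      (((-ContinuousLinearMap.mulLeftRight ℝ ℝ (f x)⁻¹ (f x)⁻¹)).comp (fderiv ℝ f x)) x :=
    (hasFDerivAt_inv' h0).comp x hf.hasFDerivAt
  rw [h1.fderiv]
  simp only [ContinuousLinearMap.comp_apply, ContinuousLinearMap.neg_apply,
    ContinuousLinearMap.mulLeftRight_apply]
  rw [eq_div_iff (pow_ne_zero 2 h0)]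
  field_simp

lemma pd_phi {n : ℕ} {U : (Fin n → ℝ) → ℝ} {x : Fin n → ℝ} (k₀ : ℝ)
    (hU : DifferentiableAt ℝ U x) (i : Fin n) :
    pd (fun y => 2 * (k₀ - U y)) i x = -2 * pd U i x := by
  unfold pd
  have h1 : HasFDerivAt (fun y => 2 * (k₀ - U y)) ((2:ℝ) • (0 - fderiv ℝ U x)) x :=
    ((hasFDerivAt_const k₀ x).sub hU.hasFDerivAt).const_mul 2
  rw [h1.fderiv]
  simp

/-- Under the conformal change `G = 2(k₀−U)g`, the symmetric differential
of a 1-form `u` satisfies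
`(dᴳˢu)ᵢⱼ = 2(k₀−U)(dᵍˢ(u/(2(k₀−U))))ᵢⱼ − (dU, u/(2(k₀−U)))_g gᵢⱼ`. -/
theorem dsym_conformal_change {n : ℕ}
    (g ginv : (Fin n → ℝ) → Matrix (Fin n) (Fin n) ℝ)
    (U : (Fin n → ℝ) → ℝ) (k₀ : ℝ)
    (hk : ∀ x, U x < k₀)
    (hg : ∀ i j, ContDiff ℝ 2 fun x => g x i j)
    (hgs : ∀ x i j, g x i j = g x j i)
    (hginv : ∀ x, ginv x * g x = 1)
    (hU : ContDiff ℝ 2 U)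
    (u : (Fin n → ℝ) → Fin n → ℝ)
    (hu : ∀ i, ContDiff ℝ 1 fun x => u x i) :
    ∀ (x : Fin n → ℝ) (i j : Fin n),
      dsym (fun y => (2 * (k₀ - U y)) • g y) (fun y => (2 * (k₀ - U y))⁻¹ • ginv y) u x i j
        = (2 * (k₀ - U x)) *
            dsym g ginv (fun y => (2 * (k₀ - U y))⁻¹ • u y) x i j
          - (∑ a, ∑ b, ginv x a b * pd U a x * ((2 * (k₀ - U x))⁻¹ * u x b)) * g x i j := by
  intro x i j
  have hUd : Differentiable ℝ U := hU.differentiable two_ne_zero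
  have hφd : Differentiable ℝ (fun y => 2 * (k₀ - U y)) :=
    ((differentiable_const k₀).sub hUd).const_mul 2
  have hφne : ∀ y, 2 * (k₀ - U y) ≠ 0 := fun y => by nlinarith [hk y]
  have hc : (2 * (k₀ - U x)) ≠ 0 := hφne x
  have hgd : ∀ a b : Fin n, Differentiable ℝ (fun y => g y a b) :=
    fun a b => (hg a b).differentiable two_ne_zero
  have hud : ∀ b : Fin n, Differentiable ℝ (fun y => u y b) :=
    fun b => (hu b).differentiable one_ne_zero
  have hA : ∀ (a b m : Fin n), pd (fun y => ((2 * (k₀ - U y)) • g y) a b) m x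
      = -2 * pd U m x * g x a b + (2 * (k₀ - U x)) * pd (fun y => g y a b) m x := by
    intro a b m
    have e : (fun y => ((2 * (k₀ - U y)) • g y) a b) = fun y => (2 * (k₀ - U y)) * g y a b := by
      funext y; simp [Matrix.smul_apply]
    rw [e, pd_mul (hφd x) ((hgd a b) x), pd_phi k₀ (hUd x)]
  have hB : ∀ (b m : Fin n), pd (fun y => (2 * (k₀ - U y))⁻¹ * u y b) m x
      = 2 * pd U m x / (2 * (k₀ - U x))^2 * u x b
        + (2 * (k₀ - U x))⁻¹ * pd (fun y => u y b) m x := by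
    intro b m
    rw [pd_mul (f := fun y => (2 * (k₀ - U y))⁻¹) ((hφd x).inv hc) ((hud b) x), pd_inv (hφd x) hc, pd_phi k₀ (hUd x)]
    ring
  have hdel : ∀ k l' : Fin n, (∑ m, ginv x k m * g x m l') = if k = l' then 1 else 0 := by
    intro k l'
    have h1 := congrArg (fun M : Matrix (Fin n) (Fin n) ℝ => M k l') (hginv x)
    simpa [Matrix.mul_apply, Matrix.one_apply] using h1
  have hginvsym : ∀ a b : Fin n, ginv x a b = ginv x b a := by
    have hgt : Matrix.transpose (g x) = g x := by
      ext a b; exact hgs x b a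
    have h2 : (g x)⁻¹ = ginv x := Matrix.inv_eq_left_inv (hginv x)
    have h3 : Matrix.transpose (ginv x) = ginv x := by
      rw [← h2, Matrix.transpose_nonsing_inv, hgt]
    intro a b
    calc ginv x a b = Matrix.transpose (ginv x) b a := rfl
      _ = ginv x b a := by rw [h3]
  have hGc : ∀ k : Fin n,
      christoffel (fun y => (2 * (k₀ - U y)) • g y) (fun y => (2 * (k₀ - U y))⁻¹ • ginv y) x k i j
      = christoffel g ginv x k i j
        - (2 * (k₀ - U x))⁻¹ * (pd U i x * (if k = j then 1 else 0)
            + pd U j x * (if k = i then 1 else 0)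
            - g x i j * ∑ l, ginv x k l * pd U l x) := by
    intro k
    unfold christoffel
    rw [← hdel k j, ← hdel k i]
    simp only [Finset.mul_sum, ← Finset.sum_add_distrib, ← Finset.sum_sub_distrib]
    refine Finset.sum_congr rfl fun l _ => ?_
    rw [hA, hA, hA]
    simp only [Pi.smul_apply, Matrix.smul_apply, smul_eq_mul]
    field_simp [sub_ne_zero.mpr (hk x).ne']
    ring
  have sumC : ∑ k, christoffel (fun y => (2 * (k₀ - U y)) • g y)
        (fun y => (2 * (k₀ - U y))⁻¹ • ginv y) x k i j * u x k
      = ∑ k, christoffel g ginv x k i j * u x k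
        - (2 * (k₀ - U x))⁻¹ * (pd U i x * u x j + pd U j x * u x i)
        + (2 * (k₀ - U x))⁻¹ * g x i j * ∑ k, ∑ l, ginv x k l * pd U l x * u x k := by
    calc ∑ k, christoffel (fun y => (2 * (k₀ - U y)) • g y)
          (fun y => (2 * (k₀ - U y))⁻¹ • ginv y) x k i j * u x k
        = ∑ k, (christoffel g ginv x k i j * u x k
            - (if k = j then (2 * (k₀ - U x))⁻¹ * pd U i x * u x k else 0)
            - (if k = i then (2 * (k₀ - U x))⁻¹ * pd U j x * u x k else 0)
            + (2 * (k₀ - U x))⁻¹ * g x i j * ((∑ l, ginv x k l * pd U l x) * u x k)) := by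
          refine Finset.sum_congr rfl fun k _ => ?_
          rw [hGc k]
          split_ifs <;> ring
      _ = _ := by
          simp only [Finset.sum_sub_distrib, Finset.sum_add_distrib, Finset.sum_ite_eq',
            Finset.mem_univ, if_true, Finset.mul_sum, Finset.sum_mul, mul_add, mul_sub]
          ring
  have hsymsum : ∑ k, ∑ l, ginv x k l * pd U l x * u x k
      = ∑ a, ∑ b, ginv x a b * pd U a x * u x b := by
    rw [Finset.sum_comm]
    exact Finset.sum_congr rfl fun a _ => Finset.sum_congr rfl fun b _ => by
      rw [hginvsym b a]
  have hpull : ∑ k, christoffel g ginv x k i j * ((2 * (k₀ - U x))⁻¹ * u x k)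
      = (2 * (k₀ - U x))⁻¹ * ∑ k, christoffel g ginv x k i j * u x k := by
    rw [Finset.mul_sum]; exact Finset.sum_congr rfl fun k _ => by ring
  have hpull2 : ∑ a, ∑ b, ginv x a b * pd U a x * ((2 * (k₀ - U x))⁻¹ * u x b)
      = (2 * (k₀ - U x))⁻¹ * ∑ a, ∑ b, ginv x a b * pd U a x * u x b := by
    rw [Finset.mul_sum]
    refine Finset.sum_congr rfl fun a _ => ?_
    rw [Finset.mul_sum]
    refine Finset.sum_congr rfl fun b _ => ?_
    ring
  unfold dsym
  rw [sumC, hsymsum]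
  simp only [Pi.smul_apply, smul_eq_mul]
  simp only [hB]
  rw [hpull, hpull2]
  field_simp [sub_ne_zero.mpr (hk x).ne']
  ring
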